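/- Global error inequality in p-norm: let p ∈ (1,2], F : ℝ^d → ℝ convex with nonempty convex compact minimizer set Ω_* and minimum F_*, ε > 0. For any x, let x_ε† be a minimizer of ‖z - x‖_p² over the ε-sublevel set S_ε = {z : F(z) ≤ F_* + ε}. Then ‖x - x_ε†‖_p ≤ (dist_p(x_ε†, Ω_*)/ε) · (F(x) - F(x_ε†)), where dist_p(z, Ω_*) = min_{w ∈ Ω_*} ‖z - w‖_p. -/

import Mathlib

/-- The ℓ_p norm on `ℝ^d`. -/
noncomputable def pNorm {d : ℕ} (p : ℝ) (x : Fin d → ℝ) : ℝ :=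
  (∑ i, |x i| ^ p) ^ (1 / p)

/-- Distance to a set measured in the ℓ_p norm. -/
noncomputable def pDist {d : ℕ} (p : ℝ) (x : Fin d → ℝ) (S : Set (Fin d → ℝ)) : ℝ :=
  sInf {r | ∃ w ∈ S, r = pNorm p (x - w)}

/-- Global error inequality in the `p`-norm, `p ∈ (1,2]`. For convex `F`
with nonempty convex compact minimizer set `Ω*` and minimum `Fstar`, `ε > 0`, if `xdag`
minimizes `‖z - x‖_p` over the `ε`-sublevel set, then
`‖x - xdag‖_p ≤ (dist_p(xdag, Ω*)/ε) * (F x - F xdag)`. -/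
theorem global_error_inequality_pnorm
    {d : ℕ} (p : ℝ) (hp1 : 1 < p) (hp2 : p ≤ 2)
    (F : (Fin d → ℝ) → ℝ)
    (hF : ConvexOn ℝ Set.univ F)
    (Ωstar : Set (Fin d → ℝ)) (Fstar : ℝ)
    (hΩ : Ωstar = {z | ∀ y, F z ≤ F y})
    (hΩne : Ωstar.Nonempty) (hΩconv : Convex ℝ Ωstar) (hΩcpt : IsCompact Ωstar)
    (hFstar : ∀ z ∈ Ωstar, F z = Fstar)
    (ε : ℝ) (hε : 0 < ε)
    (x xdag : Fin d → ℝ)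
    (hmem : xdag ∈ {z | F z ≤ Fstar + ε})
    (hproj : ∀ z ∈ {z : Fin d → ℝ | F z ≤ Fstar + ε},
      pNorm p (xdag - x) ≤ pNorm p (z - x)) :
    pNorm p (x - xdag) ≤ (pDist p xdag Ωstar / ε) * (F x - F xdag) := by
  have hp0 : (0:ℝ) < p := lt_trans one_pos hp1
  set q : ENNReal := ENNReal.ofReal p with hq
  haveI : Fact (1 ≤ q) := ⟨by
    rw [hq]
    exact_mod_cast (ENNReal.one_le_ofReal).mpr hp1.le⟩
  have hqt : q.toReal = p := ENNReal.toReal_ofReal hp0.le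
  -- identify pNorm with the PiLp norm
  have hnorm : ∀ v : Fin d → ℝ,
      pNorm p v = ‖(WithLp.equiv q (Fin d → ℝ)).symm v‖ := by
    intro v
    rw [PiLp.norm_eq_sum (by rw [hqt]; exact hp0)]
    simp [pNorm, hqt, Real.norm_eq_abs]
  have hnonneg : ∀ v : Fin d → ℝ, 0 ≤ pNorm p v := by
    intro v; rw [hnorm]; exact norm_nonneg _
  have hneg : ∀ v : Fin d → ℝ, pNorm p (-v) = pNorm p v := by
    intro v; rw [hnorm, hnorm, WithLp.equiv_symm_apply, WithLp.toLp_neg, norm_neg]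
  have htri : ∀ a b : Fin d → ℝ, pNorm p (a + b) ≤ pNorm p a + pNorm p b := by
    intro a b
    rw [hnorm, hnorm, hnorm]
    rw [show (WithLp.equiv q (Fin d → ℝ)).symm (a + b)
        = (WithLp.equiv q (Fin d → ℝ)).symm a + (WithLp.equiv q (Fin d → ℝ)).symm b from
      rfl]
    exact norm_add_le _ _
  have hsmul : ∀ (c : ℝ) (v : Fin d → ℝ), pNorm p (c • v) = |c| * pNorm p v := by
    intro c v
    rw [hnorm, hnorm, WithLp.equiv_symm_apply, WithLp.toLp_smul, norm_smul, Real.norm_eq_abs]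
  have hposdef : ∀ v : Fin d → ℝ, v ≠ 0 → 0 < pNorm p v := by
    intro v hv
    rw [hnorm]
    rw [norm_pos_iff]
    intro h
    apply hv
    have := congrArg (WithLp.equiv q (Fin d → ℝ)) h
    simpa using this
  -- Fstar is the global minimum
  obtain ⟨u, hu⟩ := hΩne
  have hmin : ∀ y, Fstar ≤ F y := by
    intro y
    have hu' : ∀ y, F u ≤ F y := by rw [hΩ] at hu; exact hu
    have := hu' y
    rwa [hFstar u hu] at this
  by_cases hx : F x ≤ Fstar + ε
  · -- x is in the sublevel set, so xdag = x
    have h0 : pNorm p (xdag - x) ≤ pNorm p (x - x) := hproj x hx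
    have hxx : pNorm p (x - x) = 0 := by
      simp only [sub_self, pNorm, Pi.zero_apply, abs_zero, Real.zero_rpow hp0.ne',
        Finset.sum_const_zero]
      exact Real.zero_rpow (one_div_ne_zero hp0.ne')
    have h1 : pNorm p (xdag - x) = 0 := le_antisymm (hxx ▸ h0) (hnonneg _)
    have hxe : xdag = x := by
      by_contra hne
      have : xdag - x ≠ 0 := sub_ne_zero.mpr hne
      exact absurd h1 (ne_of_gt (hposdef _ this))
    subst hxe
    rw [hxx, sub_self, mul_zero]
  · push_neg at hx
    -- the projection point w of xdag onto Ωstar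
    have hcont : Continuous fun w : Fin d → ℝ => pNorm p (xdag - w) := by
      have : (fun w : Fin d → ℝ => pNorm p (xdag - w))
          = (fun u : PiLp q (fun _ : Fin d => ℝ) => ‖u‖) ∘
            (fun w => (WithLp.equiv q (Fin d → ℝ)).symm (xdag - w)) := by
        funext w; simp [hnorm]
      rw [this]
      exact continuous_norm.comp
        ((PiLp.continuous_toLp (p := q) (β := fun _ : Fin d => ℝ)).comp (continuous_const.sub continuous_id))
    obtain ⟨w, hwΩ, hwmin⟩ := hΩcpt.exists_isMinOn ⟨u, hu⟩ hcont.continuousOn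
    have hbdd : BddBelow {r | ∃ w' ∈ Ωstar, r = pNorm p (xdag - w')} :=
      ⟨0, by rintro r ⟨w', -, rfl⟩; exact hnonneg _⟩
    have hD : pDist p xdag Ωstar = pNorm p (xdag - w) := by
      unfold pDist
      apply le_antisymm
      · exact csInf_le hbdd ⟨w, hwΩ, rfl⟩
      · refine le_csInf ⟨pNorm p (xdag - w), w, hwΩ, rfl⟩ ?_
        rintro r ⟨w', hw', rfl⟩
        exact isMinOn_iff.mp hwmin w' hw'
    have hA : 0 < pNorm p (xdag - x) := by
      apply hposdef
      intro h
      have : xdag = x := sub_eq_zero.mp h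
      rw [this] at hmem
      exact absurd hmem (not_le.mpr hx)
    -- Step 1 : F xdag = Fstar + ε
    have hFxdag : F xdag = Fstar + ε := by
      by_contra hne
      have hlt : F xdag < Fstar + ε := lt_of_le_of_ne hmem hne
      set t : ℝ := (Fstar + ε - F xdag) / (F x - F xdag) with ht
      have hden : 0 < F x - F xdag := by linarith
      have ht0 : 0 < t := div_pos (by linarith) hden
      have ht1 : t < 1 := (div_lt_one hden).mpr (by linarith)
      set z : Fin d → ℝ := (1 - t) • xdag + t • x with hz
      have hzconv : F z ≤ (1 - t) * F xdag + t * F x :=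
        hF.2 (Set.mem_univ xdag) (Set.mem_univ x) (by linarith) ht0.le (by ring)
      have hzval : (1 - t) * F xdag + t * F x = Fstar + ε := by
        field_simp [ht]
        linear_combination (by rw [ht]; exact div_mul_cancel₀ _ hden.ne' : t * (F x - F xdag) = Fstar + ε - F xdag)
      have hzmem : z ∈ {z : Fin d → ℝ | F z ≤ Fstar + ε} := by
        rw [Set.mem_setOf_eq]; linarith [hzconv, hzval.le]
      have hzx : z - x = (1 - t) • (xdag - x) := by
        rw [hz]; module
      have := hproj z hzmem
      rw [hzx, hsmul, abs_of_pos (by linarith : (0:ℝ) < 1 - t)] at this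
      nlinarith [hA]
    -- Step 2 : main argument with z on segment from w to x
    set c : ℝ := F x - Fstar with hc
    have hcε : ε < c := by rw [hc]; linarith
    have hc0 : 0 < c := lt_trans hε hcε
    set t : ℝ := ε / c with ht
    have ht0 : 0 < t := div_pos hε hc0
    have ht1 : t < 1 := (div_lt_one hc0).mpr hcε
    have hFw : F w = Fstar := hFstar w hwΩ
    set z : Fin d → ℝ := (1 - t) • w + t • x with hz
    have hzconv : F z ≤ (1 - t) * F w + t * F x :=
      hF.2 (Set.mem_univ w) (Set.mem_univ x) (by linarith) ht0.le (by ring)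
    have hzval : (1 - t) * F w + t * F x = Fstar + ε := by
      rw [hFw]
      field_simp [ht, hc]
      linear_combination (by rw [ht, ← hc]; exact div_mul_cancel₀ _ hc0.ne' : t * (F x - Fstar) = ε)
    have hzmem : z ∈ {z : Fin d → ℝ | F z ≤ Fstar + ε} := by
      rw [Set.mem_setOf_eq]; linarith [hzconv, hzval.le]
    have hzx : z - x = (1 - t) • (w - x) := by
      rw [hz]; module
    have hkey := hproj z hzmem
    rw [hzx, hsmul, abs_of_pos (by linarith : (0:ℝ) < 1 - t)] at hkey
    have htri' : pNorm p (w - x) ≤ pNorm p (w - xdag) + pNorm p (xdag - x) := by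
      have : w - x = (w - xdag) + (xdag - x) := by ring
      rw [this]; exact htri _ _
    set A := pNorm p (xdag - x) with hAdef
    set D := pNorm p (xdag - w) with hDdef
    have hDD : pNorm p (w - xdag) = D := by
      rw [hDdef, ← hneg (xdag - w)]; congr 1; ring
    have hineq : A ≤ (1 - t) * (D + A) := by
      calc A ≤ (1 - t) * pNorm p (w - x) := hkey
        _ ≤ (1 - t) * (D + A) := by
            apply mul_le_mul_of_nonneg_left _ (by linarith)
            rw [← hDD]; exact htri'
    -- conclude
    have hxA : pNorm p (x - xdag) = A := by
      rw [hAdef, ← hneg (xdag - x)]; congr 1; ring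
    rw [hxA, hD, hFxdag]
    have h1t : 1 - t = (c - ε) / c := by rw [ht]; field_simp
    rw [h1t] at hineq
    have h2 : c * A ≤ (c - ε) * (D + A) := by
      have h := mul_le_mul_of_nonneg_left hineq hc0.le
      calc c * A ≤ c * ((c - ε) / c * (D + A)) := h
        _ = (c - ε) * (D + A) := by field_simp
    have h3 : ε * A ≤ (c - ε) * D := by nlinarith
    have hgoal : F x - (Fstar + ε) = c - ε := by rw [hc]; ring
    rw [hgoal, div_mul_eq_mul_div, le_div_iff₀ hε]
    nlinarith [h3]
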